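/- (Theorem 1) If the cores Q are such that for every direction c ∈ Fin d, every node j ∈ Fin N and every layer α ∈ Fin r the derivative at t = 0 of t ↦ ε_{c,j}(Q with Q(c)(α)(j) replaced by Q(c)(α)(j) + t) is zero, then Q is a stationary point of the global discrepancy: for every c, j, α the derivative at t = 0 of t ↦ ε_Σ(Q with Q(c)(α)(j) replaced by Q(c)(α)(j) + t) is zero. -/

import Mathlib

open Finset

/-- Canonical-decomposition approximation:
`F(Q)(i) = ∑ α, ∏ s, Q s α (i s)`. -/
noncomputable def capF (d N r : ℕ) (Q : Fin d → Fin r → Fin N → ℝ)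
    (i : Fin d → Fin N) : ℝ :=
  ∑ α : Fin r, ∏ s : Fin d, Q s α (i s)

/-- Residual `R(Q)(i) = F(Q)(i) - T(i)`. -/
noncomputable def resid (d N r : ℕ) (T : (Fin d → Fin N) → ℝ)
    (Q : Fin d → Fin r → Fin N → ℝ) (i : Fin d → Fin N) : ℝ :=
  capF d N r Q i - T i

/-- Global discrepancy `ε_Σ(Q) = (1/(2 N^d)) ∑ i, R(Q)(i)^2`. -/
noncomputable def epsGlobal (d N r : ℕ) (T : (Fin d → Fin N) → ℝ)
    (Q : Fin d → Fin r → Fin N → ℝ) : ℝ :=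
  (1 / (2 * (N : ℝ) ^ d)) * ∑ i : Fin d → Fin N, (resid d N r T Q i) ^ 2

/-- Local discrepancy on the hyperplane `i c = j`:
`ε_{c,j}(Q) = (1/(2 N^(d-1))) ∑_{i : i c = j} R(Q)(i)^2`. -/
noncomputable def epsLocal (d N r : ℕ) (T : (Fin d → Fin N) → ℝ)
    (Q : Fin d → Fin r → Fin N → ℝ) (c : Fin d) (j : Fin N) : ℝ :=
  (1 / (2 * (N : ℝ) ^ (d - 1))) *
    ∑ i ∈ Finset.univ.filter (fun i : Fin d → Fin N => i c = j),
      (resid d N r T Q i) ^ 2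

/-- `Q[c,j := v]`: replace the core vector of direction `c` at node `j` by `v`. -/
def updVec (d N r : ℕ) (Q : Fin d → Fin r → Fin N → ℝ) (c : Fin d) (j : Fin N)
    (v : Fin r → ℝ) : Fin d → Fin r → Fin N → ℝ :=
  fun s α k => if s = c ∧ k = j then v α else Q s α k

/-- `Q` with the single entry `Q c α j` replaced by `Q c α j + t`. -/
def updOne (d N r : ℕ) (Q : Fin d → Fin r → Fin N → ℝ) (c : Fin d) (α : Fin r)
    (j : Fin N) (t : ℝ) : Fin d → Fin r → Fin N → ℝ :=
  fun s β k => if s = c ∧ β = α ∧ k = j then Q c α j + t else Q s β k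
theorem stationary_local_implies_stationary_global (d N r : ℕ) (hd : 0 < d)
    (hN : 0 < N) (hr : 0 < r) (T : (Fin d → Fin N) → ℝ)
    (Q : Fin d → Fin r → Fin N → ℝ)
    (hloc : ∀ (c : Fin d) (j : Fin N) (α : Fin r),
      HasDerivAt (fun t : ℝ => epsLocal d N r T (updOne d N r Q c α j t) c j) 0 0) :
    ∀ (c : Fin d) (j : Fin N) (α : Fin r),
      HasDerivAt (fun t : ℝ => epsGlobal d N r T (updOne d N r Q c α j t)) 0 0 := by
  intro c j α
  -- global = (1/N) * sum of locals
  have hdecomp : ∀ Q' : Fin d → Fin r → Fin N → ℝ,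
      epsGlobal d N r T Q' = (1 / (N : ℝ)) * ∑ j' : Fin N, epsLocal d N r T Q' c j' := by
    intro Q'
    unfold epsGlobal epsLocal
    have hsum : (∑ i : Fin d → Fin N, (resid d N r T Q' i) ^ 2)
        = ∑ j' : Fin N, ∑ i ∈ Finset.univ.filter (fun i : Fin d → Fin N => i c = j'),
            (resid d N r T Q' i) ^ 2 := by
      rw [← Finset.sum_fiberwise (univ) (fun i : Fin d → Fin N => i c)
        (fun i => (resid d N r T Q' i) ^ 2)]
    rw [hsum, Finset.mul_sum, Finset.mul_sum]
    refine Finset.sum_congr rfl fun j' _ => ?_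
    have hpow : (N : ℝ) ^ d = (N : ℝ) * (N : ℝ) ^ (d - 1) := by
      rw [← pow_succ']
      congr 1
      omega
    rw [hpow]
    have hN' : (N : ℝ) ≠ 0 := Nat.cast_ne_zero.mpr hN.ne'
    ring
  have key : ∀ j' : Fin N,
      HasDerivAt (fun t : ℝ => epsLocal d N r T (updOne d N r Q c α j t) c j') 0 0 := by
    intro j'
    by_cases hj : j' = j
    · subst hj; exact hloc c j' α
    · have hconst : (fun t : ℝ => epsLocal d N r T (updOne d N r Q c α j t) c j')
          = fun _ => epsLocal d N r T Q c j' := by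
        funext t
        unfold epsLocal
        congr 1
        refine Finset.sum_congr rfl fun i hi => ?_
        have hic : i c = j' := (Finset.mem_filter.mp hi).2
        congr 1
        unfold resid capF updOne
        congr 1
        refine Finset.sum_congr rfl fun β _ => ?_
        refine Finset.prod_congr rfl fun s _ => ?_
        rw [if_neg]
        rintro ⟨hs, -, hk⟩
        subst hs
        exact hj (hic.symm.trans hk)
      rw [hconst]
      exact hasDerivAt_const 0 _
  have hsum : HasDerivAt (fun t : ℝ => ∑ j' : Fin N,
      epsLocal d N r T (updOne d N r Q c α j t) c j') (∑ _j' : Fin N, (0 : ℝ)) 0 :=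
    HasDerivAt.fun_sum (fun j' _ => key j')
  have := hsum.const_mul (1 / (N : ℝ))
  simp only [Finset.sum_const_zero, mul_zero] at this
  have heq : (fun t : ℝ => epsGlobal d N r T (updOne d N r Q c α j t))
      = fun t : ℝ => (1 / (N : ℝ)) * ∑ j' : Fin N,
          epsLocal d N r T (updOne d N r Q c α j t) c j' := by
    funext t; exact hdecomp _
  rw [heq]
  exact this
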